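/- Let X be a real Banach space, Y a real Banach space, and v ∈ X** with ‖v‖ = 1 such that ‖w + v ⊗ y‖ = ‖w‖ + ‖y‖ holds for every w ∈ X ⊗ Y and every y ∈ Y, where the norm of w + v ⊗ y is the projective norm of X** ⊗ Y. Then the natural inclusion of (X ⊕ ℝv) ⊗ Y into X** ⊗ Y is isometric when both algebraic tensor products carry their projective norms, X ⊕ ℝv being the subspace of X** spanned by X and v with the norm induced from X**. -/

import Mathlib

open scoped TensorProduct
open NormedSpace

/-- The projective norm of an element of the algebraic tensor product of two normed
spaces: the infimum of `Σ ‖eᵢ‖ ‖fᵢ‖` over all finite representations `u = Σ eᵢ ⊗ fᵢ`. -/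
noncomputable def projNorm (E F : Type*) [NormedAddCommGroup E] [NormedAddCommGroup F]
    [NormedSpace ℝ E] [NormedSpace ℝ F] (u : E ⊗[ℝ] F) : ℝ :=
  sInf {s : ℝ | ∃ (n : ℕ) (e : Fin n → E) (f : Fin n → F),
    u = ∑ i, e i ⊗ₜ[ℝ] f i ∧ s = ∑ i, ‖e i‖ * ‖f i‖}

section Aux

variable {E F G : Type*} [NormedAddCommGroup E] [NormedSpace ℝ E]
  [NormedAddCommGroup F] [NormedSpace ℝ F] [NormedAddCommGroup G] [NormedSpace ℝ G]

/-- Every element of the algebraic tensor product has a finite representation. -/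
lemma exists_rep (u : E ⊗[ℝ] F) :
    ∃ (n : ℕ) (e : Fin n → E) (f : Fin n → F), u = ∑ i, e i ⊗ₜ[ℝ] f i := by
  induction u with
  | zero => exact ⟨0, ![], ![], by simp⟩
  | tmul x y => exact ⟨1, ![x], ![y], by simp⟩
  | add a b ha hb =>
    obtain ⟨n, e, f, hef⟩ := ha
    obtain ⟨m, e', f', hef'⟩ := hb
    refine ⟨n + m, Fin.append e e', Fin.append f f', ?_⟩
    rw [Fin.sum_univ_add]
    simp [Fin.append_left, Fin.append_right, hef, hef']

lemma repSet_nonempty (u : E ⊗[ℝ] F) :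
    {s : ℝ | ∃ (n : ℕ) (e : Fin n → E) (f : Fin n → F),
      u = ∑ i, e i ⊗ₜ[ℝ] f i ∧ s = ∑ i, ‖e i‖ * ‖f i‖}.Nonempty := by
  obtain ⟨n, e, f, h⟩ := exists_rep u
  exact ⟨_, n, e, f, h, rfl⟩

lemma repSet_bddBelow (u : E ⊗[ℝ] F) :
    BddBelow {s : ℝ | ∃ (n : ℕ) (e : Fin n → E) (f : Fin n → F),
      u = ∑ i, e i ⊗ₜ[ℝ] f i ∧ s = ∑ i, ‖e i‖ * ‖f i‖} := by
  refine ⟨0, fun s hs => ?_⟩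
  obtain ⟨n, e, f, -, rfl⟩ := hs
  exact Finset.sum_nonneg fun i _ => mul_nonneg (norm_nonneg _) (norm_nonneg _)

lemma projNorm_le_rep {u : E ⊗[ℝ] F} {n : ℕ} {e : Fin n → E} {f : Fin n → F}
    (h : u = ∑ i, e i ⊗ₜ[ℝ] f i) :
    projNorm E F u ≤ ∑ i, ‖e i‖ * ‖f i‖ :=
  csInf_le (repSet_bddBelow u) ⟨n, e, f, h, rfl⟩

lemma exists_rep_lt (u : E ⊗[ℝ] F) {ε : ℝ} (hε : 0 < ε) :
    ∃ (n : ℕ) (e : Fin n → E) (f : Fin n → F),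
      u = ∑ i, e i ⊗ₜ[ℝ] f i ∧ ∑ i, ‖e i‖ * ‖f i‖ < projNorm E F u + ε := by
  obtain ⟨s, hs, hlt⟩ := Real.lt_sInf_add_pos (repSet_nonempty u) hε
  obtain ⟨n, e, f, h, rfl⟩ := hs
  exact ⟨n, e, f, h, hlt⟩

/-- Projective norm does not increase under a norm-nonincreasing map on the left factor. -/
lemma projNorm_map_le (L : E →ₗ[ℝ] G) (hL : ∀ x, ‖L x‖ ≤ ‖x‖) (u : E ⊗[ℝ] F) :
    projNorm G F (TensorProduct.map L LinearMap.id u) ≤ projNorm E F u := by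
  refine le_csInf (repSet_nonempty u) ?_
  rintro s ⟨n, e, f, h, rfl⟩
  have hrep : TensorProduct.map L LinearMap.id u = ∑ i, (L (e i)) ⊗ₜ[ℝ] (f i) := by
    rw [h, map_sum]; simp
  refine (projNorm_le_rep hrep).trans ?_
  exact Finset.sum_le_sum fun i _ =>
    mul_le_mul_of_nonneg_right (hL _) (norm_nonneg _)

/-- Key lemma: abstract version of the statement. -/
lemma key {X : Type*} [NormedAddCommGroup X] [NormedSpace ℝ X]
    (J : X →ₗ[ℝ] E) (hJ : ∀ x, ‖J x‖ = ‖x‖) (Z : Submodule ℝ E)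
    (v : E) (hv1 : ‖v‖ = 1) (hvZmem : v ∈ Z) (hmem : ∀ x, J x ∈ Z)
    (hspan : ∀ z : Z, ∃ (x : X) (t : ℝ), (z : E) = J x + t • v)
    (hv : ∀ (w : X ⊗[ℝ] F) (y : F),
      projNorm E F (TensorProduct.map J LinearMap.id w + v ⊗ₜ[ℝ] y)
        = projNorm X F w + ‖y‖) :
    ∀ w : Z ⊗[ℝ] F,
      projNorm E F (TensorProduct.map Z.subtype LinearMap.id w) = projNorm Z F w := by
  intro w
  set vZ : Z := ⟨v, hvZmem⟩ with hvZdef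
  set toZ : X →ₗ[ℝ] Z := LinearMap.codRestrict Z J hmem with htoZ
  have hcomp : Z.subtype ∘ₗ toZ = J := by ext x; rfl
  have hnormtoZ : ∀ x : X, ‖toZ x‖ = ‖x‖ := fun x => hJ x
  have hnormvZ : ‖vZ‖ = 1 := hv1
  -- decomposition of w
  have hdec : ∃ (u : X ⊗[ℝ] F) (y : F),
      w = TensorProduct.map toZ LinearMap.id u + vZ ⊗ₜ[ℝ] y := by
    induction w with
    | zero => exact ⟨0, 0, by simp⟩
    | tmul z y' =>
      obtain ⟨x, t, hxt⟩ := hspan z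
      refine ⟨x ⊗ₜ[ℝ] y', t • y', ?_⟩
      have hzeq : z = toZ x + t • vZ := by
        apply Subtype.ext
        simpa [htoZ, hvZdef] using hxt
      rw [hzeq, TensorProduct.add_tmul, TensorProduct.map_tmul]
      congr 1
      rw [TensorProduct.smul_tmul]
    | add a b ha hb =>
      obtain ⟨u1, y1, h1⟩ := ha
      obtain ⟨u2, y2, h2⟩ := hb
      exact ⟨u1 + u2, y1 + y2, by
        rw [h1, h2, map_add, TensorProduct.tmul_add]; abel⟩
  obtain ⟨u, y, rfl⟩ := hdec
  have hcomp2 : ∀ u : X ⊗[ℝ] F,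
      TensorProduct.map Z.subtype LinearMap.id (TensorProduct.map toZ LinearMap.id u)
        = TensorProduct.map J LinearMap.id u := fun u => by
    rw [← LinearMap.comp_apply, ← TensorProduct.map_comp, hcomp, LinearMap.id_comp]
  have himg : TensorProduct.map Z.subtype LinearMap.id
      (TensorProduct.map toZ LinearMap.id u + vZ ⊗ₜ[ℝ] y)
      = TensorProduct.map J LinearMap.id u + v ⊗ₜ[ℝ] y := by
    rw [map_add, TensorProduct.map_tmul, hcomp2]
    rfl
  rw [himg, hv u y]
  apply le_antisymm
  · -- projNorm X u + ‖y‖ ≤ projNorm Z w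
    rw [← hv u y, ← himg]
    exact projNorm_map_le Z.subtype (fun z => le_of_eq rfl) _
  · -- projNorm Z w ≤ projNorm X u + ‖y‖
    refine le_of_forall_pos_le_add fun ε hε => ?_
    obtain ⟨n, e, f, hrep, hlt⟩ := exists_rep_lt u hε
    have hrepw : TensorProduct.map toZ LinearMap.id u + vZ ⊗ₜ[ℝ] y
        = ∑ i : Fin (n + 1), (Fin.append (fun i => toZ (e i)) ![vZ] i)
            ⊗ₜ[ℝ] (Fin.append f ![y] i) := by
      rw [Fin.sum_univ_add]
      simp only [Fin.append_left, Fin.append_right]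
      rw [hrep, map_sum]
      simp
    refine (projNorm_le_rep hrepw).trans ?_
    rw [Fin.sum_univ_add]
    simp only [Fin.append_left, Fin.append_right]
    have h1 : ∑ i : Fin n, ‖toZ (e i)‖ * ‖f i‖ = ∑ i, ‖e i‖ * ‖f i‖ := by
      simp [hnormtoZ]
    have h2 : (∑ i : Fin 1, ‖(![vZ] : Fin 1 → Z) i‖ * ‖(![y] : Fin 1 → F) i‖) = ‖y‖ := by
      simp [hnormvZ]
    rw [h1, h2]
    linarith

end Aux

set_option maxHeartbeats 1000000 in
/-- let `X`, `Y` be Banach spaces and `v ∈ S_{X**}` be such that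
`‖w + v ⊗ y‖ = ‖w‖ + ‖y‖` (projective norm in `X** ⊗ Y`) for every `w ∈ X ⊗ Y` and
every `y ∈ Y`. Then the natural inclusion of `(X ⊕ ℝv) ⊗ Y` into `X** ⊗ Y` is isometric
for the projective norms, where `X ⊕ ℝv` is the subspace of `X**` spanned by `X` and `v`
with the induced norm. -/
theorem stmt_6 (X Y : Type*) [NormedAddCommGroup X] [NormedSpace ℝ X] [CompleteSpace X]
    [NormedAddCommGroup Y] [NormedSpace ℝ Y] [CompleteSpace Y]
    (v : StrongDual ℝ (StrongDual ℝ X)) (hv1 : ‖v‖ = 1)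
    (hv : ∀ (w : X ⊗[ℝ] Y) (y : Y),
      projNorm (StrongDual ℝ (StrongDual ℝ X)) Y
        (TensorProduct.map (inclusionInDoubleDual ℝ X).toLinearMap LinearMap.id w
          + v ⊗ₜ[ℝ] y)
      = projNorm X Y w + ‖y‖) :
    ∀ w : ↥(LinearMap.range (inclusionInDoubleDual ℝ X).toLinearMap
        ⊔ Submodule.span ℝ {v}) ⊗[ℝ] Y,
      projNorm (StrongDual ℝ (StrongDual ℝ X)) Y
        (TensorProduct.map
          (LinearMap.range (inclusionInDoubleDual ℝ X).toLinearMap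
            ⊔ Submodule.span ℝ {v}).subtype LinearMap.id w)
      = @projNorm (↥(LinearMap.range (inclusionInDoubleDual ℝ X).toLinearMap
          ⊔ Submodule.span ℝ {v})) Y
          (Submodule.normedAddCommGroup (𝕜 := ℝ) (E := StrongDual ℝ (StrongDual ℝ X)) _) _
          (Submodule.normedSpace (𝕜 := ℝ) (R := ℝ) (E := StrongDual ℝ (StrongDual ℝ X)) _) _ w := by
  have hJ : ∀ x : X, ‖(inclusionInDoubleDual ℝ X).toLinearMap x‖ = ‖x‖ := fun x =>
    (inclusionInDoubleDualLi ℝ (E := X)).norm_map x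
  refine key (F := Y) (inclusionInDoubleDual ℝ X).toLinearMap hJ
    ((LinearMap.range (inclusionInDoubleDual ℝ X).toLinearMap ⊔ Submodule.span ℝ {v}
      : Submodule ℝ (StrongDual ℝ (StrongDual ℝ X)))) v hv1
    (Submodule.mem_sup_right (Submodule.mem_span_singleton_self v))
    (fun x => Submodule.mem_sup_left (LinearMap.mem_range_self _ x)) ?_ ?_
  · rintro ⟨z, hz⟩
    obtain ⟨a, ha, b, hb, hab⟩ := Submodule.mem_sup.mp hz
    obtain ⟨x, rfl⟩ := ha
    obtain ⟨t, rfl⟩ := Submodule.mem_span_singleton.mp hb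
    exact ⟨x, t, hab.symm⟩
  · exact hv
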